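/- If A and A' are two non-disjoint subsets of a fine saturated (fs) sharp monoid M, each of which is ∞-close (i.e., all elements of the subset lie on a common ray: there exists a ∈ M and positive integers λᵢ with each element equal to λᵢ·a), then the union A ∪ A' is also ∞-close. -/

import Mathlib

/-- A monoid is sharp if it has no nontrivial units. -/
def IsSharp (M : Type*) [AddCommMonoid M] : Prop := ∀ x y : M, x + y = 0 → x = 0

/-- Saturation, phrased via the divisibility order: if `n • x` divides `n • y` then
`x` divides `y`. -/
def IsSaturated (M : Type*) [AddCommMonoid M] : Prop :=
  ∀ (n : ℕ) (x y : M), 0 < n → (∃ z, n • x + z = n • y) → ∃ z, x + z = y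

/-- A subset `A` of `M` is `∞`-close if all of its elements lie on a common ray:
there is `a : M` and positive integers `λ` with `λ • a = x` for each `x ∈ A`. -/
def InftyClose {M : Type*} [AddCommMonoid M] (A : Set M) : Prop :=
  ∃ a : M, ∀ x ∈ A, ∃ k : ℕ, 0 < k ∧ k • a = x

private lemma bezout_aux {k l : ℕ} (hk : 0 < k) (h : Nat.gcd k l = 1) :
    ∃ s t : ℕ, s * k = 1 + t * l := by
  rcases lt_or_ge 1 l with hl | hl
  · obtain ⟨m, -, hm⟩ := Nat.exists_mul_mod_eq_one_of_coprime
      (Nat.coprime_iff_gcd_eq_one.mpr h) hl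
    refine ⟨m, k * m / l, ?_⟩
    have h2 := Nat.div_add_mod (k * m) l
    have h3 : m * k = k * m := mul_comm m k
    have h4 : (k * m / l) * l = l * (k * m / l) := mul_comm _ _
    omega
  · interval_cases l
    · have : k = 1 := by simpa using h
      exact ⟨1, 0, by omega⟩
    · exact ⟨1, k - 1, by omega⟩

/-- In a cancellative, sharp, saturated monoid, `n • ·` is injective for `n > 0`. -/
private lemma nsmul_inj {M : Type*} [AddCancelCommMonoid M]
    (hsharp : IsSharp M) (hsat : IsSaturated M) {n : ℕ} (hn : 0 < n)
    {x y : M} (h : n • x = n • y) : x = y := by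
  obtain ⟨z, hz⟩ := hsat n x y hn ⟨0, by rw [add_zero, h]⟩
  obtain ⟨w, hw⟩ := hsat n y x hn ⟨0, by rw [add_zero, h]⟩
  have hzw : z + w = 0 := by
    have : x + (z + w) = x + 0 := by
      rw [add_zero, ← add_assoc, hz, hw]
    exact add_left_cancel this
  have : z = 0 := hsharp z w hzw
  rw [← hz, this, add_zero]

/-- For a fine saturated sharp monoid `M`, the union of two non-disjoint
`∞`-close subsets is `∞`-close. -/
theorem stmt_0 {M : Type*} [AddCancelCommMonoid M] [DecidableEq M] (hFG : AddMonoid.FG M)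
    (hsharp : IsSharp M) (hsat : IsSaturated M)
    (A A' : Finset M) (hne : (A ∩ A').Nonempty)
    (hA : InftyClose (A : Set M)) (hA' : InftyClose (A' : Set M)) :
    InftyClose ((A ∪ A' : Finset M) : Set M) := by
  obtain ⟨a, ha⟩ := hA
  obtain ⟨b, hb⟩ := hA'
  obtain ⟨c, hc⟩ := hne
  rw [Finset.mem_inter] at hc
  obtain ⟨k, hk, hka⟩ := ha c (by exact_mod_cast hc.1)
  obtain ⟨l, hl, hlb⟩ := hb c (by exact_mod_cast hc.2)
  have hkl : k • a = l • b := hka.trans hlb.symm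
  set g := Nat.gcd k l with hg
  have hgpos : 0 < g := Nat.gcd_pos_of_pos_left l hk
  set k' := k / g with hk'
  set l' := l / g with hl'
  have hkg : k' * g = k := Nat.div_mul_cancel (Nat.gcd_dvd_left k l)
  have hlg : l' * g = l := Nat.div_mul_cancel (Nat.gcd_dvd_right k l)
  have hk'pos : 0 < k' := Nat.div_pos (Nat.le_of_dvd hk (Nat.gcd_dvd_left k l)) hgpos
  have hl'pos : 0 < l' := Nat.div_pos (Nat.le_of_dvd hl (Nat.gcd_dvd_right k l)) hgpos
  have hcop : Nat.gcd k' l' = 1 := Nat.coprime_div_gcd_div_gcd hgpos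
  -- k' • a = l' • b
  have hkl' : k' • a = l' • b := by
    apply nsmul_inj hsharp hsat hgpos
    rw [← mul_nsmul, ← mul_nsmul, hkg, hlg, hkl]
  -- Bezout: s * k' = 1 + t * l'
  obtain ⟨s, t, hst⟩ := bezout_aux hk'pos hcop
  -- a + l' • (t • a) = l' • (s • b)
  have key : l' • (t • a) + a = l' • (s • b) := by
    have e1 : l' • (s • b) = (k' * s) • a := by
      rw [smul_comm, ← hkl', mul_nsmul]
    have e2 : l' • (t • a) = (t * l') • a := (mul_nsmul a t l').symm
    have e3 : k' * s = t * l' + 1 := by rw [mul_comm, hst, add_comm]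
    rw [e1, e2, e3, add_nsmul, one_nsmul]
  obtain ⟨d, hd⟩ := hsat l' (t • a) (s • b) hl'pos ⟨a, key⟩
  have hda : l' • d = a := by
    have h1 : l' • (t • a) + l' • d = l' • (s • b) := by
      rw [← smul_add, hd]
    exact add_left_cancel (h1.trans key.symm)
  have hdb : k' • d = b := by
    apply nsmul_inj hsharp hsat hl'pos
    rw [smul_comm, hda, hkl']
  refine ⟨d, ?_⟩
  intro x hx
  simp only [Finset.coe_union, Set.mem_union, Finset.mem_coe] at hx
  rcases hx with hx | hx
  · obtain ⟨m, hm, hma⟩ := ha x (by exact_mod_cast hx)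
    exact ⟨l' * m, Nat.mul_pos hl'pos hm, by rw [mul_nsmul, hda, hma]⟩
  · obtain ⟨m, hm, hmb⟩ := hb x (by exact_mod_cast hx)
    exact ⟨k' * m, Nat.mul_pos hk'pos hm, by rw [mul_nsmul, hdb, hmb]⟩
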